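/- Let P be a probability measure on ℝ whose support is contained in a compact interval, let f : ℝ → ℝ be a polynomial function, and let y, a ∈ ℝ. Then ∫ exp(y · f(u + a)) dP(u) = ∑_{n=0}^∞ (m_n / n!) · g^{(n)}(a), where m_n = ∫ u^n dP(u) is the n-th moment of P, g(t) = exp(y · f(t)), and g^{(n)} denotes the n-th iterated derivative of g; in particular the series on the right converges. -/

import Mathlib

open MeasureTheory

/-- For a compactly supported probability measure `P`, a polynomial `f` and `y, a ∈ ℝ`,
`∫ exp (y * f (u + a)) dP(u) = ∑ (m n / n!) * g⁽ⁿ⁾(a)` where `g t = exp (y * f t)`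
and `m n` is the `n`-th moment of `P`; in particular the series converges. -/
lemma iteratedDeriv_ofReal_comp (G : ℂ → ℂ) (g : ℝ → ℝ) (hG : Differentiable ℂ G)
    (h : ∀ x : ℝ, G x = (g x : ℂ)) (n : ℕ) (a : ℝ) :
    iteratedDeriv n G a = Complex.ofReal (iteratedDeriv n g a) := by
  induction n generalizing G g with
  | zero => simp [h]
  | succ n ih =>
    rw [iteratedDeriv_succ', iteratedDeriv_succ']
    have hG' : Differentiable ℂ (deriv G) :=
      ((contDiff_infty_iff_deriv.mp hG.contDiff).2).differentiable (by simp)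
    refine ih (deriv G) (deriv g) hG' (fun x => ?_)
    have hd : HasDerivAt G (deriv G x) x := (hG x).hasDerivAt
    have hc : HasDerivAt (fun t : ℝ => G t) (deriv G x) x := hd.comp_ofReal
    have hc' : HasDerivAt (fun t : ℝ => (g t : ℂ)) (deriv G x) x := by
      simpa only [h] using hc
    have hre : HasDerivAt g (deriv G x).re x := by
      have := hd.real_of_complex
      simpa only [h, Complex.ofReal_re] using this
    have him : (deriv G (x : ℂ)).im = 0 := by
      have h1 : HasDerivAt (fun t : ℝ => ((g t : ℂ)).im) (deriv G x).im x :=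
        Complex.imCLM.hasFDerivAt.comp_hasDerivAt x hc'
      have h2 : HasDerivAt (fun _ : ℝ => (0 : ℝ)) (deriv G x).im x := by
        simpa using h1
      simpa using h2.unique (hasDerivAt_const x 0)
    rw [hre.deriv]
    apply Complex.ext <;> simp [him]

theorem pushforward_exp_series (P : Measure ℝ) [IsProbabilityMeasure P]
    (c d : ℝ) (hsupp : P (Set.Icc c d)ᶜ = 0)
    (f : Polynomial ℝ) (y a : ℝ) :
    HasSum
      (fun n : ℕ => (∫ u, u ^ n ∂P) / n.factorial *
        iteratedDeriv n (fun t => Real.exp (y * f.eval t)) a)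
      (∫ u, Real.exp (y * f.eval (u + a)) ∂P) := by
  set g : ℝ → ℝ := fun t => Real.exp (y * f.eval t) with hg
  set G : ℂ → ℂ := fun z => Complex.exp (y * (f.map (Complex.ofRealHom : ℝ →+* ℂ)).eval z)
    with hGdef
  have hG : Differentiable ℂ G :=
    Complex.differentiable_exp.comp ((differentiable_const _).mul
      (f.map (Complex.ofRealHom : ℝ →+* ℂ)).differentiable)
  have hcomp : ∀ x : ℝ, G x = (g x : ℂ) := by
    intro x
    simp only [hGdef, hg, Polynomial.eval_map]
    rw [show ((x : ℝ) : ℂ) = Complex.ofRealHom x from rfl, Polynomial.eval₂_at_apply]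
    rw [show (Complex.ofRealHom (f.eval x)) = ((f.eval x : ℝ) : ℂ) from rfl,
      ← Complex.ofReal_mul, Complex.ofReal_exp]
  have hID : ∀ n (t : ℝ), iteratedDeriv n G t = Complex.ofReal (iteratedDeriv n g t) :=
    fun n t => iteratedDeriv_ofReal_comp G g hG hcomp n t
  -- pointwise Taylor series
  have hpt : ∀ u : ℝ,
      HasSum (fun n : ℕ => iteratedDeriv n g a / n.factorial * u ^ n) (g (u + a)) := by
    intro u
    have H := Complex.hasSum_taylorSeries_of_entire hG a ((u + a : ℝ) : ℂ)
    rw [hcomp (u + a)] at H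
    have H2 := Complex.reCLM.hasSum H
    simp only [Complex.ofReal_add, add_sub_cancel_right] at H2
    convert H2 using 2 with n
    rw [hID n a, Complex.reCLM_apply, smul_eq_mul, smul_eq_mul,
      show ((n.factorial : ℂ))⁻¹ * ((u : ℂ) ^ n * ((iteratedDeriv n g a : ℝ) : ℂ))
        = (((iteratedDeriv n g a / n.factorial * u ^ n : ℝ) : ℂ)) from by push_cast; ring,
      Complex.ofReal_re]
    rw [Complex.reCLM_apply, Complex.ofReal_re]
  set cn : ℕ → ℝ := fun n => iteratedDeriv n g a / n.factorial with hcn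
  set M : ℝ := max |c| |d| with hM
  have hM0 : 0 ≤ M := le_trans (abs_nonneg c) (le_max_left _ _)
  have haeM : ∀ᵐ u ∂P, |u| ≤ M := by
    have : ∀ᵐ u ∂P, u ∈ Set.Icc c d := by
      rw [MeasureTheory.ae_iff]
      exact hsupp
    filter_upwards [this] with u hu
    exact abs_le_max_abs_abs hu.1 hu.2
  -- summability of |cn| * M^n
  have hsumM : Summable fun n => |cn n| * M ^ n := by
    have H : Summable fun n => cn n * (M + 1) ^ n := (hpt (M + 1)).summable
    have H0 : Filter.Tendsto (fun n => |cn n| * (M + 1) ^ n) Filter.atTop (nhds 0) := by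
      have := H.tendsto_atTop_zero.abs
      simp only [abs_zero] at this
      refine this.congr fun n => ?_
      rw [abs_mul, abs_of_nonneg (by positivity : (0:ℝ) ≤ (M + 1) ^ n)]
    obtain ⟨C, hC⟩ := H0.bddAbove_range
    have key : ∀ n, |cn n| * M ^ n ≤ C * (M / (M + 1)) ^ n := by
      intro n
      have h1 : |cn n| * (M + 1) ^ n ≤ C := hC (Set.mem_range_self n)
      have hpos : (0:ℝ) < (M + 1) ^ n := pow_pos (by linarith) n
      calc |cn n| * M ^ n = (|cn n| * (M + 1) ^ n) * (M ^ n / (M + 1) ^ n) := by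
            field_simp
        _ ≤ C * (M ^ n / (M + 1) ^ n) :=
            mul_le_mul_of_nonneg_right h1 (by positivity)
        _ = C * (M / (M + 1)) ^ n := by rw [div_pow]
    refine Summable.of_nonneg_of_le (fun n => by positivity) key ?_
    refine Summable.mul_left C (summable_geometric_of_lt_one (by positivity) ?_)
    rw [div_lt_one (by linarith)]; linarith
  -- integrability of each term
  set F : ℕ → ℝ → ℝ := fun n u => cn n * u ^ n with hF
  have hbound : ∀ n : ℕ, ∀ᵐ u ∂P, ‖F n u‖ ≤ |cn n| * M ^ n := by
    intro n
    filter_upwards [haeM] with u hu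
    rw [hF]
    simp only [Real.norm_eq_abs, abs_mul, abs_pow]
    exact mul_le_mul_of_nonneg_left
      (pow_le_pow_left₀ (abs_nonneg u) hu n) (abs_nonneg _)
  have hFint : ∀ n : ℕ, Integrable (F n) P := by
    intro n
    refine (integrable_const (|cn n| * M ^ n)).mono' ?_ (hbound n)
    exact (continuous_const.mul (continuous_pow n)).aestronglyMeasurable
  have hnorm_sum : Summable fun n => ∫ u, ‖F n u‖ ∂P := by
    refine Summable.of_nonneg_of_le
      (fun n => integral_nonneg fun u => norm_nonneg _) (fun n => ?_) hsumM
    calc ∫ u, ‖F n u‖ ∂P ≤ ∫ _, |cn n| * M ^ n ∂P :=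
          integral_mono_ae (hFint n).norm (integrable_const _) (hbound n)
      _ = |cn n| * M ^ n := by simp
  have final := MeasureTheory.hasSum_integral_of_summable_integral_norm hFint hnorm_sum
  have h2 : ∫ u, (∑' n, F n u) ∂P = ∫ u, Real.exp (y * f.eval (u + a)) ∂P := by
    refine integral_congr_ae (Filter.Eventually.of_forall fun u => ?_)
    show (∑' n, F n u) = _
    simp only [hF, hcn]
    rw [(hpt u).tsum_eq]
  have h1 : (fun n => ∫ u, F n u ∂P)
      = fun n : ℕ => (∫ u, u ^ n ∂P) / n.factorial *
        iteratedDeriv n (fun t => Real.exp (y * f.eval t)) a := by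
    funext n
    rw [hF, integral_const_mul, hcn]
    ring
  rw [← h1, ← h2]
  exact final
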